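/- arXiv:1405.0396 — 5 statements merged into one kernel-verified Lean document; each statement's English description precedes it below -/
import Mathlib

section
/- Let X be a topological space and T a Hausdorff topological space. For every continuous map a : X → T, the induced homomorphism ⟨a⟩ lies in the subgroup R ⊆ L(X,T). -/
open FreeAbelianGroup in
/-- `L(X,Y)`: the subgroup of `Hom(⟨X⟩,⟨Y⟩)` generated by the homomorphisms `u` such that
each `u⟨x⟩` is `0` or some basis element `⟨y⟩`. -/
def Lgroup (X Y : Type*) : AddSubgroup (FreeAbelianGroup X →+ FreeAbelianGroup Y) :=
  AddSubgroup.closure {u | ∀ x : X, u (of x) = 0 ∨ ∃ y : Y, u (of x) = of y}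

/-- The homomorphism `⟨a⟩ : ⟨X⟩ → ⟨Y⟩` induced by a map `a : X → Y`. -/
def inducedHom {X Y : Type*} (a : X → Y) : FreeAbelianGroup X →+ FreeAbelianGroup Y :=
  FreeAbelianGroup.lift (fun x => FreeAbelianGroup.of (a x))

lemma inducedHom_mem {X Y : Type*} (a : X → Y) : inducedHom a ∈ Lgroup X Y :=
  AddSubgroup.subset_closure (fun x => Or.inr ⟨a x, FreeAbelianGroup.lift_apply_of _ _⟩)

/-- `⟨a⟩` as an element of `L(X,Y)`. -/
def inducedL {X Y : Type*} (a : X → Y) : Lgroup X Y := ⟨inducedHom a, inducedHom_mem a⟩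

/-- A function on continuous maps is a homotopy invariant if it only depends on homotopy
classes. -/
def IsHomotopyInvariant {X Y : Type*} [TopologicalSpace X] [TopologicalSpace Y] {M : Type*}
    [AddCommGroup M] (f : C(X, Y) → M) : Prop :=
  ∀ a b : C(X, Y), a.Homotopic b → f a = f b

/-- A homotopy invariant `f` is straight if it factors as `f a = F ⟨a⟩` for an additive
homomorphism `F : L(X,Y) → M`. -/
def IsStraight {X Y : Type*} [TopologicalSpace X] [TopologicalSpace Y] {M : Type*}
    [AddCommGroup M] (f : C(X, Y) → M) : Prop :=
  ∃ F : Lgroup X Y →+ M, ∀ a : C(X, Y), f a = F (inducedL a)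
open FreeAbelianGroup Classical in
/-- `s_V(u)(x)`: the sum over `t ∈ V` of the coefficient of `⟨t⟩` in `u⟨x⟩`. -/
noncomputable def sV {X T : Type*} (V : Set T) :
    (FreeAbelianGroup X →+ FreeAbelianGroup T) →+ (X → ℤ) where
  toFun u x := (toFinsupp (u (of x))).sum fun t k => if t ∈ V then k else 0
  map_zero' := by
    funext x
    simp
  map_add' u v := by
    funext x
    simp only [AddMonoidHom.add_apply, map_add, Pi.add_apply]
    rw [Finsupp.sum_add_index]
    · intro t _; simp
    · intro t _ k₁ k₂; split_ifs <;> simp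

/-- The subgroup `R(p,q)`: homomorphisms `u` such that for all sufficiently small open
neighbourhoods `V` of `q`, the function `s_V(u)` is constant on some neighbourhood of `p`. -/
noncomputable def Rpq {X T : Type*} [TopologicalSpace X] [TopologicalSpace T] (p : X) (q : T) :
    AddSubgroup (FreeAbelianGroup X →+ FreeAbelianGroup T) where
  carrier := {u | ∃ V₀ : Set T, IsOpen V₀ ∧ q ∈ V₀ ∧ ∀ V : Set T, IsOpen V → q ∈ V → V ⊆ V₀ →
    ∃ U ∈ nhds p, ∃ c : ℤ, ∀ x ∈ U, sV V u x = c}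
  zero_mem' :=
    ⟨Set.univ, isOpen_univ, trivial, fun V _ _ _ =>
      ⟨Set.univ, Filter.univ_mem, 0, fun x _ => by simp [map_zero]⟩⟩
  add_mem' := by
    rintro u v ⟨V₀, hV₀o, hqV₀, hu⟩ ⟨W₀, hW₀o, hqW₀, hv⟩
    refine ⟨V₀ ∩ W₀, hV₀o.inter hW₀o, ⟨hqV₀, hqW₀⟩, fun V hVo hqV hVsub => ?_⟩
    obtain ⟨U₁, hU₁, c₁, hc₁⟩ := hu V hVo hqV (hVsub.trans Set.inter_subset_left)
    obtain ⟨U₂, hU₂, c₂, hc₂⟩ := hv V hVo hqV (hVsub.trans Set.inter_subset_right)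
    refine ⟨U₁ ∩ U₂, Filter.inter_mem hU₁ hU₂, c₁ + c₂, fun x hx => ?_⟩
    rw [map_add]
    simp [hc₁ x hx.1, hc₂ x hx.2]
  neg_mem' := by
    rintro u ⟨V₀, hV₀o, hqV₀, hu⟩
    refine ⟨V₀, hV₀o, hqV₀, fun V hVo hqV hVsub => ?_⟩
    obtain ⟨U, hU, c, hc⟩ := hu V hVo hqV hVsub
    refine ⟨U, hU, -c, fun x hx => ?_⟩
    rw [map_neg]
    simp [hc x hx]

/-- The subgroup `R`: the intersection of the subgroups `R(p,q)` over all `p ∈ X`, `q ∈ T`. -/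
noncomputable def Rsub (X T : Type*) [TopologicalSpace X] [TopologicalSpace T] :
    AddSubgroup (FreeAbelianGroup X →+ FreeAbelianGroup T) :=
  ⨅ p : X, ⨅ q : T, Rpq p q

open Classical in
/-- The homomorphism `e(D,a)` sending `⟨x⟩` to `⟨a(x)⟩` for `x ∈ D` and to `0` otherwise. -/
noncomputable def eHom {X T : Type*} (D : Set X) (a : D → T) :
    FreeAbelianGroup X →+ FreeAbelianGroup T :=
  FreeAbelianGroup.lift fun x =>
    if h : x ∈ D then FreeAbelianGroup.of (a ⟨x, h⟩) else 0

/-- The subgroup `K ⊆ L(X,T)` generated by the homomorphisms `e(D,a)` for `D ⊆ X` closed and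
`a : D → T` continuous. -/
noncomputable def Ksub (X T : Type*) [TopologicalSpace X] [TopologicalSpace T] :
    AddSubgroup (FreeAbelianGroup X →+ FreeAbelianGroup T) :=
  AddSubgroup.closure {u | ∃ (D : Set X) (_ : IsClosed D) (a : C(D, T)), u = eHom D ⇑a}

/-- **Lemma 6.1.** For every continuous map `a : X → T` with `T` Hausdorff, the induced
homomorphism `⟨a⟩ ∈ L(X,T)` lies in the subgroup `R`. -/
theorem inducedHom_mem_Rsub (X T : Type*) [TopologicalSpace X] [TopologicalSpace T]
    [T2Space T] (a : C(X, T)) :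
    inducedHom ⇑a ∈ Lgroup X T ∧ inducedHom ⇑a ∈ Rsub X T := by
  refine ⟨inducedHom_mem _, ?_⟩
  classical
  have key : ∀ (V : Set T) (x : X), sV V (inducedHom (⇑a)) x = if a x ∈ V then 1 else 0 := by
    intro V x
    simp only [sV, inducedHom, AddMonoidHom.coe_mk, ZeroHom.coe_mk, FreeAbelianGroup.lift_apply_of,
      FreeAbelianGroup.toFinsupp_of]
    rw [Finsupp.sum_single_index] <;> simp
  simp only [Rsub, AddSubgroup.mem_iInf]
  intro p q
  by_cases hpq : a p = q
  · refine ⟨Set.univ, isOpen_univ, trivial, fun V hVo hqV _ => ?_⟩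
    refine ⟨a ⁻¹' V, (hVo.preimage a.continuous).mem_nhds (by simp [hpq, hqV]), 1, fun x hx => ?_⟩
    rw [key]
    simp [Set.mem_preimage.mp hx]
  · obtain ⟨V₀, W, hV₀o, hWo, hqV₀, hpW, hdisj⟩ := t2_separation (Ne.symm hpq)
    refine ⟨V₀, hV₀o, hqV₀, fun V hVo hqV hVsub => ?_⟩
    refine ⟨a ⁻¹' W, (hWo.preimage a.continuous).mem_nhds hpW, 0, fun x hx => ?_⟩
    rw [key]
    have : a x ∉ V := fun h => Set.disjoint_left.mp hdisj (hVsub h) hx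
    simp [this]
end

section
/- Let X be a topological space and T a Hausdorff topological space. Then the quotient abelian group L(X,T)/R is a free abelian group. -/
open Filter Set

section Ulim
variable {α : Type*}

open Classical in
noncomputable def ulim (f : α → ℤ) (W : Ultrafilter α) : ℤ :=
  if h : ∃ v, {a | f a = v} ∈ W then h.choose else 0

lemma ulim_eq {f : α → ℤ} {W : Ultrafilter α} {v : ℤ} (hv : {a | f a = v} ∈ W) :
    ulim f W = v := by
  have h : ∃ v, {a | f a = v} ∈ W := ⟨v, hv⟩
  rw [ulim]
  rw [dif_pos h]
  obtain ⟨a, ha1, ha2⟩ := Ultrafilter.nonempty_of_mem (inter_mem h.choose_spec hv)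
  exact ha1.symm.trans ha2

lemma exists_ulim {f : α → ℤ} (hf : (Set.range f).Finite) (W : Ultrafilter α) :
    ∃ v, {a | f a = v} ∈ W := by
  by_contra h
  push_neg at h
  have h2 : (⋂ v ∈ hf.toFinset, {a | f a ≠ v}) ∈ W := by
    refine (Filter.biInter_finset_mem _).2 fun v _ => ?_
    have := Ultrafilter.compl_mem_iff_notMem.2 (h v)
    simpa [Set.compl_setOf] using this
  obtain ⟨a, ha⟩ := Ultrafilter.nonempty_of_mem h2
  simp only [Set.mem_iInter, Set.mem_setOf_eq] at ha
  exact ha (f a) (by simp) rfl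

lemma ulim_spec {f : α → ℤ} (hf : (Set.range f).Finite) (W : Ultrafilter α) :
    {a | f a = ulim f W} ∈ W := by
  obtain ⟨v, hv⟩ := exists_ulim hf W
  rw [ulim_eq hv]; exact hv

lemma ulim_eq_iff {f : α → ℤ} (hf : (Set.range f).Finite) {W : Ultrafilter α} {v : ℤ} :
    ulim f W = v ↔ {a | f a = v} ∈ W :=
  ⟨fun h => h ▸ ulim_spec hf W, ulim_eq⟩

lemma ulim_add {f g : α → ℤ} (hf : (Set.range f).Finite) (hg : (Set.range g).Finite)
    (W : Ultrafilter α) : ulim (fun a => f a + g a) W = ulim f W + ulim g W := by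
  refine ulim_eq (mem_of_superset (inter_mem (ulim_spec hf W) (ulim_spec hg W)) ?_)
  rintro a ⟨h1, h2⟩
  simp only [Set.mem_setOf_eq] at *
  rw [h1, h2]

lemma isOpen_ulim_eq {f : α → ℤ} (hf : (Set.range f).Finite) (v : ℤ) :
    IsOpen {W : Ultrafilter α | ulim f W = v} := by
  have : {W : Ultrafilter α | ulim f W = v} = {W : Ultrafilter α | {a | f a = v} ∈ W} := by
    ext W; exact ulim_eq_iff hf
  rw [this]
  exact ultrafilter_isOpen_basic _

lemma isLocallyConstant_ulim {f : α → ℤ} (hf : (Set.range f).Finite) :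
    IsLocallyConstant (fun W : Ultrafilter α => ulim f W) := by
  intro s
  have : (fun W : Ultrafilter α => ulim f W) ⁻¹' s = ⋃ v ∈ s, {W | ulim f W = v} := by
    ext W; simp
  rw [this]
  exact isOpen_biUnion fun v _ => isOpen_ulim_eq hf v

end Ulim

open Filter Set

section SubFree

variable {ι : Type*} [LinearOrder ι] [WellFoundedLT ι] (N : Submodule ℤ (ι →₀ ℤ))

/-- Elements of `N` supported on indices `≤ i`. -/
private noncomputable def Nle (i : ι) : Submodule ℤ (ι →₀ ℤ) :=
  N ⊓ (⨅ j ∈ {j : ι | i < j}, LinearMap.ker (Finsupp.lapply j (R := ℤ) (M := ℤ)))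

private lemma mem_Nle {i : ι} {f : ι →₀ ℤ} :
    f ∈ Nle N i ↔ f ∈ N ∧ ∀ j, i < j → f j = 0 := by
  simp [Nle, Submodule.mem_iInf, Finsupp.lapply]

/-- The ideal of leading coefficients at `i`. -/
private noncomputable def cId (i : ι) : Ideal ℤ := (Nle N i).map (Finsupp.lapply i)

private noncomputable def gen (i : ι) : ℤ :=
  haveI : (cId N i).IsPrincipal := IsPrincipalIdealRing.principal _
  Submodule.IsPrincipal.generator (cId N i)

private lemma gen_spec (i : ι) : ∃ f, f ∈ Nle N i ∧ f i = gen N i := by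
  haveI : (cId N i).IsPrincipal := IsPrincipalIdealRing.principal _
  have : gen N i ∈ cId N i := Submodule.IsPrincipal.generator_mem _
  obtain ⟨f, hf, hfi⟩ := Submodule.mem_map.mp this
  exact ⟨f, hf, hfi⟩

private lemma mem_cId {i : ι} {f : ι →₀ ℤ} (hf : f ∈ Nle N i) :
    ∃ k : ℤ, f i = k * gen N i := by
  haveI : (cId N i).IsPrincipal := IsPrincipalIdealRing.principal _
  have : f i ∈ cId N i := Submodule.mem_map_of_mem hf
  obtain ⟨k, hk⟩ := (Submodule.IsPrincipal.mem_iff_eq_smul_generator _).mp this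
  exact ⟨k, hk.trans (smul_eq_mul _ _)⟩

private noncomputable def yy (i : ι) : ι →₀ ℤ := (gen_spec N i).choose

private lemma yy_mem (i : ι) : yy N i ∈ N := ((mem_Nle N).mp (gen_spec N i).choose_spec.1).1

private lemma yy_hi (i : ι) : ∀ j, i < j → yy N i j = 0 :=
  ((mem_Nle N).mp (gen_spec N i).choose_spec.1).2

private lemma yy_apply (i : ι) : yy N i i = gen N i := (gen_spec N i).choose_spec.2

private noncomputable def vv : {i : ι // gen N i ≠ 0} → (ι →₀ ℤ) := fun i => yy N i.1

private lemma span_ge : ∀ f ∈ N, f ∈ Submodule.span ℤ (Set.range (vv N)) := by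
  set SP := Submodule.span ℤ (Set.range (vv N)) with hSP
  have key : ∀ i : ι, ∀ f ∈ N, (∀ j, i < j → f j = 0) → f ∈ SP := by
    intro i
    induction i using WellFoundedLT.induction with
    | _ i IH =>
      intro f hfN hfb
      have hfle : f ∈ Nle N i := (mem_Nle N).mpr ⟨hfN, hfb⟩
      obtain ⟨k₀, hk₀⟩ := mem_cId N hfle
      -- normalize k so that k = 0 when gen = 0
      obtain ⟨k, hk, hknz⟩ : ∃ k : ℤ, f i = k * gen N i ∧ (gen N i = 0 → k = 0) := by
        by_cases hg : gen N i = 0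
        · exact ⟨0, by simp [hk₀, hg], fun _ => rfl⟩
        · exact ⟨k₀, hk₀, fun h => absurd h hg⟩
      set f' := f - k • yy N i with hf'
      have hyN : yy N i ∈ N := yy_mem N i
      have hf'N : f' ∈ N := N.sub_mem hfN (N.smul_mem _ hyN)
      have hf'b : ∀ j, i ≤ j → f' j = 0 := by
        intro j hij
        rcases eq_or_lt_of_le hij with rfl | hlt
        · simp [hf', Finsupp.sub_apply, Finsupp.smul_apply, hk, yy_apply, smul_eq_mul]
        · simp [hf', Finsupp.sub_apply, Finsupp.smul_apply, hfb j hlt, yy_hi N i j hlt]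
      have hys : k • yy N i ∈ SP := by
        by_cases hg : gen N i = 0
        · simp [hknz hg]
        · exact SP.smul_mem _ (Submodule.subset_span ⟨⟨i, hg⟩, rfl⟩)
      have hfeq : f = f' + k • yy N i := by simp [hf']
      rcases eq_or_ne f' 0 with h0 | hne
      · rw [hfeq, h0, zero_add]; exact hys
      · have hsupp : f'.support.Nonempty := Finsupp.support_nonempty_iff.mpr hne
        set m := f'.support.max' hsupp with hm
        have hmi : m < i := by
          have hmem : m ∈ f'.support := f'.support.max'_mem hsupp
          have : f' m ≠ 0 := Finsupp.mem_support_iff.mp hmem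
          by_contra h
          exact this (hf'b m (le_of_not_gt h))
        have hbnd : ∀ j, m < j → f' j = 0 := by
          intro j hj
          by_contra h
          exact absurd (f'.support.le_max' j (Finsupp.mem_support_iff.mpr h)) (not_le.mpr hj)
        have := IH m hmi f' hf'N hbnd
        rw [hfeq]
        exact SP.add_mem this hys
  intro f hf
  rcases eq_or_ne f 0 with rfl | hne
  · exact SP.zero_mem
  · have hsupp : f.support.Nonempty := Finsupp.support_nonempty_iff.mpr hne
    refine key (f.support.max' hsupp) f hf fun j hj => ?_
    by_contra h
    exact absurd (f.support.le_max' j (Finsupp.mem_support_iff.mpr h)) (not_le.mpr hj)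

private lemma li : LinearIndependent ℤ (vv N) := by
  rw [linearIndependent_iff']
  have main : ∀ t : Finset {i : ι // gen N i ≠ 0}, ∀ c : {i : ι // gen N i ≠ 0} → ℤ,
      (∑ i ∈ t, c i • vv N i) = 0 → ∀ i ∈ t, c i = 0 := by
    intro t
    induction t using Finset.strongInduction with
    | _ t IH =>
      intro c hsum i hi
      have hne : t.Nonempty := ⟨i, hi⟩
      set i₀ := t.max' hne with hi₀
      -- evaluate at i₀
      have heval : (∑ j ∈ t, c j • vv N j) i₀.1 = c i₀ * gen N i₀.1 := by
        rw [Finset.sum_apply']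
        rw [Finset.sum_eq_single i₀]
        · simp [vv, Finsupp.smul_apply, smul_eq_mul, yy_apply]
        · intro j hj hne'
          have hlt : j < i₀ := lt_of_le_of_ne (t.le_max' j hj) hne'
          have : (j : ι) < (i₀ : ι) := hlt
          simp [vv, Finsupp.smul_apply, yy_hi N j.1 i₀.1 this]
        · intro h; exact absurd (t.max'_mem hne) h
      have hc₀ : c i₀ = 0 := by
        have : c i₀ * gen N i₀.1 = 0 := by rw [← heval, hsum]; rfl
        rcases mul_eq_zero.mp this with h | h
        · exact h
        · exact absurd h i₀.2
      rcases eq_or_ne i i₀ with rfl | hii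
      · exact hc₀
      · refine IH (t.erase i₀) (Finset.erase_ssubset (t.max'_mem hne)) c ?_ i
          (Finset.mem_erase.mpr ⟨hii, hi⟩)
        have h2 : c i₀ • vv N i₀ + ∑ x ∈ t.erase i₀, c x • vv N x = ∑ x ∈ t, c x • vv N x :=
          Finset.add_sum_erase t (fun j => c j • vv N j) (t.max'_mem hne)
        rw [hsum, hc₀, zero_smul, zero_add] at h2
        exact h2
  intro t c h i hi
  exact main t c h i hi

private lemma span_eq : Submodule.span ℤ (Set.range (vv N)) = N := by
  apply le_antisymm
  · rw [Submodule.span_le]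
    rintro _ ⟨i, rfl⟩
    exact yy_mem N i.1
  · intro f hf
    exact span_ge N f hf

private noncomputable def theBasis : Module.Basis {i : ι // gen N i ≠ 0} ℤ N :=
  (Module.Basis.span (li N)).map (LinearEquiv.ofEq _ _ (span_eq N))

end SubFree

theorem free_of_finsupp {ι : Type*} (N : Submodule ℤ (ι →₀ ℤ)) : Module.Free ℤ N := by
  obtain ⟨_, _⟩ := exists_wellOrder ι
  exact Module.Free.of_basis (theBasis N)

theorem free_submodule {M : Type*} [AddCommGroup M] [Module ℤ M] [Module.Free ℤ M]
    (N : Submodule ℤ M) : Module.Free ℤ N := by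
  let e := ((Module.Free.chooseBasis ℤ M).repr : M ≃ₗ[ℤ] (Module.Free.ChooseBasisIndex ℤ M →₀ ℤ))
  haveI : Module.Free ℤ (N.map e.toLinearMap) := free_of_finsupp _
  have h1 : @Module.Free ℤ (↥N) _ N.addCommMonoid N.module :=
    @Module.Free.of_equiv ℤ ℤ (↥(N.map e.toLinearMap)) (↥N) _ _ _ _ N.addCommMonoid N.module _ _ _ _
      (Submodule.equivMapOfInjective e.toLinearMap e.injective N).symm _
  haveI : Subsingleton (Module ℤ N) := @Unique.instSubsingleton _ AddCommGroup.uniqueIntModule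
  rwa [Subsingleton.elim (AddCommGroup.toIntModule _) N.module]

section Bound

variable {X T : Type*}

open Classical in
lemma sV_apply (V : Set T) (u : FreeAbelianGroup X →+ FreeAbelianGroup T) (x : X) :
    sV V u x = (FreeAbelianGroup.toFinsupp (u (FreeAbelianGroup.of x))).sum
      fun t k => if t ∈ V then k else 0 := rfl

lemma sV_bound_of_mem {u : FreeAbelianGroup X →+ FreeAbelianGroup T}
    (hu : u ∈ Lgroup X T) : ∃ n : ℤ, ∀ (V : Set T) (x : X), |sV V u x| ≤ n := by
  induction hu using AddSubgroup.closure_induction with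
  | mem w hw =>
    refine ⟨1, fun V x => ?_⟩
    classical
    rcases hw x with h0 | ⟨y, hy⟩
    · rw [sV_apply, h0, map_zero, Finsupp.sum_zero_index]; norm_num
    · rw [sV_apply, hy, FreeAbelianGroup.toFinsupp_of,
        Finsupp.sum_single_index (by simp)]
      split_ifs <;> norm_num
  | zero =>
    exact ⟨0, fun V x => by rw [map_zero]; simp⟩
  | add u v hu hv ihu ihv =>
    obtain ⟨n, hn⟩ := ihu
    obtain ⟨m, hm⟩ := ihv
    refine ⟨n + m, fun V x => ?_⟩
    rw [map_add]
    calc |(sV V u + sV V v) x| = |sV V u x + sV V v x| := rfl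
      _ ≤ |sV V u x| + |sV V v x| := abs_add_le _ _
      _ ≤ n + m := add_le_add (hn V x) (hm V x)
  | neg u hu ihu =>
    obtain ⟨n, hn⟩ := ihu
    refine ⟨n, fun V x => ?_⟩
    rw [map_neg]
    calc |(-sV V u) x| = |sV V u x| := abs_neg _
      _ ≤ n := hn V x

/-- The function whose ultrafilter limits define the embedding. -/
noncomputable def gfun (u : FreeAbelianGroup X →+ FreeAbelianGroup T) :
    X × X × Set T → ℤ :=
  fun z => sV z.2.2 u z.1 - sV z.2.2 u z.2.1

lemma gfun_finite_range {u : FreeAbelianGroup X →+ FreeAbelianGroup T}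
    (hu : u ∈ Lgroup X T) : (Set.range (gfun u)).Finite := by
  obtain ⟨n, hn⟩ := sV_bound_of_mem hu
  apply (Set.finite_Icc (-(2 * n)) (2 * n)).subset
  rintro _ ⟨z, rfl⟩
  have h1 := abs_le.mp (hn z.2.2 z.1)
  have h2 := abs_le.mp (hn z.2.2 z.2.1)
  simp only [Set.mem_Icc, gfun]
  constructor <;> linarith

lemma gfun_add (u v : FreeAbelianGroup X →+ FreeAbelianGroup T) :
    gfun (u + v) = fun z => gfun u z + gfun v z := by
  funext z
  simp only [gfun, map_add, Pi.add_apply]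
  ring

end Bound

section Machine

variable (X T : Type*) [TopologicalSpace X] [TopologicalSpace T]

/-- Choice functions assigning to each pair `(p,q)` an open neighbourhood of `q`. -/
def Choices : Type _ := {c : X → T → Set T // ∀ p q, IsOpen (c p q) ∧ q ∈ c p q}

instance : Nonempty (Choices X T) :=
  ⟨⟨fun _ _ => Set.univ, fun _ _ => ⟨isOpen_univ, trivial⟩⟩⟩

/-- Limit points used to test membership in `R`, restricted by a choice function `c`. -/
def Pc (c : Choices X T) : Set (Ultrafilter (X × X × Set T)) :=
  {ω | ∃ (p : X) (q : T) (V : Set T) (U : Ultrafilter X), ↑U ≤ nhds p ∧ IsOpen V ∧ q ∈ V ∧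
    V ⊆ c.1 p q ∧ ω = U.map (fun x => (x, p, V))}

/-- The closure of `Pc`. -/
def Zc (c : Choices X T) : Set (Ultrafilter (X × X × Set T)) := closure (Pc X T c)

/-- The profinite set on which the quotient `L/R` is realized as functions. -/
def Zinf : Set (Ultrafilter (X × X × Set T)) := ⋂ c : Choices X T, Zc X T c

lemma Zc_mono {c d : Choices X T} (h : ∀ p q, c.1 p q ⊆ d.1 p q) :
    Zc X T c ⊆ Zc X T d := by
  apply closure_mono
  rintro ω ⟨p, q, V, U, h1, h2, h3, h4, h5⟩
  exact ⟨p, q, V, U, h1, h2, h3, h4.trans (h p q), h5⟩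

lemma isClosed_Zinf : IsClosed (Zinf X T) := isClosed_iInter fun _ => isClosed_closure

/-- The underlying function of the embedding `L → LocallyConstant Z∞ ℤ`. -/
noncomputable def Phi0 (u : Lgroup X T) : LocallyConstant (Zinf X T) ℤ :=
  ⟨fun ω => ulim (gfun u.1) ω.1,
    (isLocallyConstant_ulim (gfun_finite_range u.2)).comp_continuous continuous_subtype_val⟩

/-- The embedding `L → LocallyConstant Z∞ ℤ` as an additive homomorphism. -/
noncomputable def Phi : Lgroup X T →+ LocallyConstant (Zinf X T) ℤ :=
  AddMonoidHom.mk' (Phi0 X T) (by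
    intro u v
    ext ω
    show ulim (gfun ((u : FreeAbelianGroup X →+ FreeAbelianGroup T) + v.1)) ω.1 =
      ulim (gfun u.1) ω.1 + ulim (gfun v.1) ω.1
    rw [gfun_add, ulim_add (gfun_finite_range u.2) (gfun_finite_range v.2)])

lemma mem_Rpq_iff {p : X} {q : T} {u : FreeAbelianGroup X →+ FreeAbelianGroup T} :
    u ∈ Rpq p q ↔ ∃ V₀ : Set T, IsOpen V₀ ∧ q ∈ V₀ ∧ ∀ V : Set T, IsOpen V → q ∈ V → V ⊆ V₀ →
      ∃ U ∈ nhds p, ∃ c : ℤ, ∀ x ∈ U, sV V u x = c := Iff.rfl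

lemma mem_Rsub_iff {u : FreeAbelianGroup X →+ FreeAbelianGroup T} :
    u ∈ Rsub X T ↔ ∀ (p : X) (q : T), u ∈ Rpq p q := by
  simp [Rsub, AddSubgroup.mem_iInf]

theorem ker_Phi : (Phi X T).ker = (Rsub X T).addSubgroupOf (Lgroup X T) := by
  ext u
  rw [AddMonoidHom.mem_ker, AddSubgroup.mem_addSubgroupOf, mem_Rsub_iff]
  constructor
  · intro hu p q
    set O : Set (Ultrafilter (X × X × Set T)) := {W | ulim (gfun u.1) W = 0} with hO
    have hOopen : IsOpen O := isOpen_ulim_eq (gfun_finite_range u.2) 0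
    have hZO : Zinf X T ⊆ O := by
      intro ω hω
      have h := DFunLike.congr_fun hu (⟨ω, hω⟩ : Zinf X T)
      simpa [Phi, Phi0, hO] using h
    obtain ⟨c, hc⟩ : ∃ c : Choices X T, Zc X T c ⊆ O := by
      by_contra hcon
      push_neg at hcon
      have hne : ∀ c : Choices X T, (Zc X T c ∩ Oᶜ).Nonempty := by
        intro c
        obtain ⟨w, hw1, hw2⟩ := Set.not_subset.mp (hcon c)
        exact ⟨w, hw1, hw2⟩
      have hdir : Directed (· ⊇ ·) (fun c : Choices X T => Zc X T c ∩ Oᶜ) := by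
        intro c d
        refine ⟨⟨fun p q => c.1 p q ∩ d.1 p q, fun p q =>
          ⟨(c.2 p q).1.inter (d.2 p q).1, (c.2 p q).2, (d.2 p q).2⟩⟩, ?_, ?_⟩
        · exact Set.inter_subset_inter_left _
            (Zc_mono X T (fun p q => Set.inter_subset_left))
        · exact Set.inter_subset_inter_left _
            (Zc_mono X T (fun p q => Set.inter_subset_right))
      have hcl : ∀ c : Choices X T, IsClosed (Zc X T c ∩ Oᶜ) := fun c =>
        isClosed_closure.inter hOopen.isClosed_compl
      obtain ⟨ω, hω⟩ := IsCompact.nonempty_iInter_of_directed_nonempty_isCompact_isClosed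
        _ hdir hne (fun c => (hcl c).isCompact) hcl
      have hωZ : ω ∈ Zinf X T := Set.mem_iInter.mpr fun c => (Set.mem_iInter.mp hω c).1
      exact (Set.mem_iInter.mp hω (Classical.arbitrary _)).2 (hZO hωZ)
    refine ⟨c.1 p q, (c.2 p q).1, (c.2 p q).2, fun V hVo hqV hVsub => ?_⟩
    refine ⟨{x | sV V u.1 x = sV V u.1 p}, ?_, sV V u.1 p, fun x hx => hx⟩
    rw [Filter.mem_iff_ultrafilter]
    intro g hg
    have hmem : (Ultrafilter.map (fun x => (x, p, V)) g) ∈ Zc X T c :=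
      subset_closure ⟨p, q, V, g, hg, hVo, hqV, hVsub, rfl⟩
    have h0 : ulim (gfun u.1) (Ultrafilter.map (fun x => (x, p, V)) g) = 0 := hc hmem
    have hsp := ulim_spec (gfun_finite_range u.2) (Ultrafilter.map (fun x => (x, p, V)) g)
    rw [h0, Ultrafilter.mem_map] at hsp
    refine Filter.mem_of_superset hsp ?_
    intro x hx
    simp only [Set.mem_preimage, Set.mem_setOf_eq, gfun] at hx ⊢
    exact sub_eq_zero.mp hx
  · intro hu
    have hc : ∀ (p : X) (q : T), ∃ V₀ : Set T, IsOpen V₀ ∧ q ∈ V₀ ∧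
        ∀ V : Set T, IsOpen V → q ∈ V → V ⊆ V₀ →
        ∃ U ∈ nhds p, ∃ k : ℤ, ∀ x ∈ U, sV V u.1 x = k := fun p q => hu p q
    choose V₀ hV₀o hV₀q hV₀ using hc
    ext ω
    show ulim (gfun u.1) ω.1 = 0
    have hcl : IsClosed {W : Ultrafilter (X × X × Set T) | ulim (gfun u.1) W = 0} := by
      have hcont : Continuous (fun W : Ultrafilter (X × X × Set T) => ulim (gfun u.1) W) :=
        (isLocallyConstant_ulim (gfun_finite_range u.2)).continuous
      exact (isClosed_singleton (x := (0 : ℤ))).preimage hcont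
    set c : Choices X T := ⟨V₀, fun p q => ⟨hV₀o p q, hV₀q p q⟩⟩ with hcdef
    have hP : Pc X T c ⊆ {W | ulim (gfun u.1) W = 0} := by
      rintro _ ⟨p, q, V, U, hU, hVo, hqV, hVsub, rfl⟩
      obtain ⟨Uset, hUmem, k, hk⟩ := hV₀ p q V hVo hqV hVsub
      have hpk : sV V u.1 p = k := hk p (mem_of_mem_nhds hUmem)
      apply ulim_eq
      rw [Ultrafilter.mem_map]
      refine Filter.mem_of_superset (hU hUmem) ?_
      intro x hx
      simp only [Set.mem_preimage, Set.mem_setOf_eq, gfun]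
      rw [hk x hx, hpk, sub_self]
    exact closure_minimal hP hcl (Set.mem_iInter.mp ω.2 c)

end Machine

/-- **Lemma 6.2.** For `X` a space and `T` a Hausdorff space, the quotient abelian group
`L(X,T)/R` is free. -/
theorem quotient_Lgroup_Rsub_free (X T : Type*) [TopologicalSpace X] [TopologicalSpace T]
    [T2Space T] :
    Module.Free ℤ (Lgroup X T ⧸ (Rsub X T).addSubgroupOf (Lgroup X T)) := by
  classical
  haveI : CompactSpace (Zinf X T) := isCompact_iff_compactSpace.mp (isClosed_Zinf X T).isCompact
  haveI hfree : Module.Free ℤ (LocallyConstant (Zinf X T) ℤ) :=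
    LocallyConstant.freeOfProfinite (Profinite.of (Zinf X T))
  haveI hsub : Module.Free ℤ ↥(AddSubgroup.toIntSubmodule (Phi X T).range) :=
    free_submodule _
  let e1 : (Lgroup X T ⧸ (Rsub X T).addSubgroupOf (Lgroup X T)) ≃+
      (Lgroup X T ⧸ (Phi X T).ker) :=
    QuotientAddGroup.quotientAddEquivOfEq (ker_Phi X T).symm
  let e2 : (Lgroup X T ⧸ (Phi X T).ker) ≃+ (Phi X T).range :=
    QuotientAddGroup.quotientKerEquivRange (Phi X T)
  let e3 : ((Phi X T).range : AddSubgroup (LocallyConstant (Zinf X T) ℤ)) ≃+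
      ↥(AddSubgroup.toIntSubmodule (Phi X T).range) :=
    { toFun := fun x => ⟨x.1, x.2⟩
      invFun := fun x => ⟨x.1, x.2⟩
      left_inv := fun _ => rfl
      right_inv := fun _ => rfl
      map_add' := fun _ _ => rfl }
  exact Module.Free.of_equiv ((e1.trans e2).trans e3).symm.toIntLinearEquiv
end

section
/- Let X be a topological space, T a Hausdorff topological space, D ⊆ X a closed subset, a : D → T a continuous map, p ∈ X, and q ∈ T. If e(D,a) does not lie in R(p,q), then p ∈ D and a(p) = q. -/
open Classical in
lemma sV_eHom {X T : Type*} (V : Set T) (D : Set X) (a : D → T) (x : X) :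
    sV V (eHom D a) x = if h : x ∈ D then (if a ⟨x, h⟩ ∈ V then 1 else 0) else 0 := by
  show ((eHom D a (FreeAbelianGroup.of x)).toFinsupp).sum (fun t k => if t ∈ V then k else 0) = _
  rw [eHom, FreeAbelianGroup.lift_apply_of]
  split_ifs with h hv
  · rw [FreeAbelianGroup.toFinsupp_of, Finsupp.sum_single_index (by simp), if_pos hv]
  · rw [FreeAbelianGroup.toFinsupp_of, Finsupp.sum_single_index (by simp), if_neg hv]
  · simp

/-- **Lemma 6.3.** If `e(D,a) ∉ R(p,q)` then `p ∈ D` and `a(p) = q`. -/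
theorem mem_and_eq_of_eHom_not_mem_Rpq (X T : Type*) [TopologicalSpace X] [TopologicalSpace T]
    [T2Space T] (D : Set X) (hD : IsClosed D) (a : C(D, T)) (p : X) (q : T)
    (h : eHom D ⇑a ∉ Rpq p q) :
    ∃ hp : p ∈ D, a ⟨p, hp⟩ = q := by
  by_contra hc
  push_neg at hc
  apply h
  by_cases hp : p ∈ D
  · have hne : a ⟨p, hp⟩ ≠ q := hc hp
    obtain ⟨W, V₀, hWo, hV₀o, haW, hqV₀, hdisj⟩ := t2_separation hne
    refine ⟨V₀, hV₀o, hqV₀, fun V hVo hqV hVsub => ?_⟩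
    obtain ⟨U', hU'o, hU'eq⟩ := isOpen_induced_iff.mp (hWo.preimage a.continuous)
    have hpU' : p ∈ U' := by
      have : (⟨p, hp⟩ : D) ∈ Subtype.val ⁻¹' U' := by rw [hU'eq]; exact haW
      exact this
    refine ⟨U' ∪ Dᶜ, ((hU'o.union hD.isOpen_compl).mem_nhds (Or.inl hpU')), 0, fun x hx => ?_⟩
    rw [sV_eHom]
    by_cases hxD : x ∈ D
    · rw [dif_pos hxD]
      have hxU' : x ∈ U' := hx.resolve_right (fun hxc => hxc hxD)
      have haxW : a ⟨x, hxD⟩ ∈ W := by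
        have : (⟨x, hxD⟩ : D) ∈ Subtype.val ⁻¹' U' := hxU'
        rw [hU'eq] at this; exact this
      have : a ⟨x, hxD⟩ ∉ V := fun hv => hdisj.ne_of_mem haxW (hVsub hv) rfl
      rw [if_neg this]
    · rw [dif_neg hxD]
  · refine ⟨Set.univ, isOpen_univ, trivial, fun V hVo hqV _ =>
      ⟨Dᶜ, hD.isOpen_compl.mem_nhds hp, 0, fun x hx => ?_⟩⟩
    rw [sV_eHom, dif_neg hx]
end

section
/- Let X be a topological space and T a Hausdorff topological space equipped with an abelian group structure such that for every closed subset D ⊆ X, the pointwise sum and the pointwise negation of continuous maps D → T are again continuous. Then for every u ∈ K ∩ R, the function G(u) : X → T is continuous. -/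
open FreeAbelianGroup Classical in
lemma sV_apply_eq {X T : Type*} (V : Set T) (u : FreeAbelianGroup X →+ FreeAbelianGroup T)
    (x : X) :
    sV V u x = FreeAbelianGroup.lift (fun t => if t ∈ V then (1:ℤ) else 0) (u (of x)) := by
  show (toFinsupp (u (of x))).sum (fun t k => if t ∈ V then k else 0) = _
  generalize u (of x) = z
  induction z using FreeAbelianGroup.induction_on with
  | zero => simp
  | of t => rw [toFinsupp_of, Finsupp.sum_single_index (by simp), lift_apply_of]
  | neg t ih =>
      rw [map_neg, map_neg, ← ih, toFinsupp_of, Finsupp.sum_neg_index (by simp),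
        Finsupp.sum_single_index (by simp), Finsupp.sum_single_index (by simp)]
      split <;> simp
  | add y z ihy ihz =>
      rw [map_add, map_add, ← ihy, ← ihz, Finsupp.sum_add_index (by simp) (by intros; split <;> simp)]

open FreeAbelianGroup Classical in
lemma eHom_apply_of {X T : Type*} (D : Set X) (a : D → T) (x : X) :
    eHom D a (of x) = if h : x ∈ D then of (a ⟨x, h⟩) else 0 :=
  lift_apply_of _ _

open FreeAbelianGroup in
lemma Ksub_repr {X T : Type*} [TopologicalSpace X] [TopologicalSpace T]
    {u : FreeAbelianGroup X →+ FreeAbelianGroup T} (hu : u ∈ Ksub X T) :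
    ∃ (n : ℕ) (v : Fin n → (FreeAbelianGroup X →+ FreeAbelianGroup T)),
      (∀ j, ∃ (D : Set X) (a : D → T) (ε : ℤ), IsClosed D ∧ Continuous a ∧
        (ε = 1 ∨ ε = -1) ∧ v j = ε • eHom D a) ∧ u = ∑ j, v j := by
  have h1 : u ∈ (AddSubgroup.closure
      {w : FreeAbelianGroup X →+ FreeAbelianGroup T |
        ∃ (D : Set X) (_ : IsClosed D) (a : C(D, T)), w = eHom D ⇑a}).toAddSubmonoid := hu
  rw [AddSubgroup.closure_toAddSubmonoid] at h1
  obtain ⟨l, hl, hsum⟩ := AddSubmonoid.exists_list_of_mem_closure h1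
  refine ⟨l.length, l.get, fun j => ?_, by rw [← hsum, ← List.sum_ofFn, List.ofFn_get]⟩
  have hmem := hl (l.get j) (l.get_mem j)
  rcases hmem with h | h
  · obtain ⟨D, hD, a, ha⟩ := h
    exact ⟨D, ⇑a, 1, hD, a.continuous, Or.inl rfl, by rw [ha, one_smul]⟩
  · rw [Set.mem_neg] at h
    obtain ⟨D, hD, a, ha⟩ := h
    exact ⟨D, ⇑a, -1, hD, a.continuous, Or.inr rfl,
      by rw [← neg_neg (l.get j), ha, neg_smul, one_smul]⟩

lemma continuous_finsetSum_closedSub {X T : Type*} [TopologicalSpace X] [TopologicalSpace T]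
    [AddCommGroup T]
    (hadd : ∀ D : Set X, IsClosed D → ∀ f g : D → T,
      Continuous f → Continuous g → Continuous (f + g))
    (D : Set X) (hD : IsClosed D) {ι : Type*} (s : Finset ι)
    (f : ι → D → T) (hf : ∀ i ∈ s, Continuous (f i)) :
    Continuous (fun x : D => ∑ i ∈ s, f i x) := by
  classical
  induction s using Finset.cons_induction with
  | empty => simpa using continuous_const
  | cons i s hi ih =>
      have he : (fun x : D => ∑ j ∈ Finset.cons i s hi, f j x)
          = f i + fun x : D => ∑ j ∈ s, f j x := by
        funext x; rw [Finset.sum_cons]; rfl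
      rw [he]
      exact hadd D hD _ _ (hf i (Finset.mem_cons_self i s))
        (ih fun j hj => hf j (Finset.mem_cons_of_mem hj))

open FreeAbelianGroup


/-- **Lemma 6.6.** If `T` is a Hausdorff space with an abelian group structure such that
continuous maps from closed subsets of `X` to `T` are closed under pointwise sum and
negation, then `G(u)` is continuous for every `u ∈ K ∩ R`. -/
theorem continuous_G_of_mem_Ksub_inf_Rsub (X T : Type*) [TopologicalSpace X]
    [TopologicalSpace T] [T2Space T] [AddCommGroup T]
    (hadd : ∀ D : Set X, IsClosed D → ∀ f g : D → T,
      Continuous f → Continuous g → Continuous (f + g))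
    (hneg : ∀ D : Set X, IsClosed D → ∀ f : D → T, Continuous f → Continuous (-f))
    (u : FreeAbelianGroup X →+ FreeAbelianGroup T) (hu : u ∈ Ksub X T ⊓ Rsub X T) :
    Continuous fun x : X => FreeAbelianGroup.lift (id : T → T) (u (FreeAbelianGroup.of x)) := by
  classical
  obtain ⟨huK, huR⟩ := hu
  obtain ⟨n, v, hv, hrep⟩ := Ksub_repr huK
  choose D a ε hD ha hε hveq using hv
  -- total extensions
  set aext : Fin n → X → T := fun j x => if h : x ∈ D j then a j ⟨x, h⟩ else 0 with haext
  have hu_of : ∀ x : X, u (of x) =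
      ∑ j, ε j • (if h : x ∈ D j then of (a j ⟨x, h⟩) else 0) := by
    intro x
    rw [hrep, AddMonoidHom.finset_sum_apply]
    refine Finset.sum_congr rfl fun j _ => ?_
    rw [hveq j]
    rw [AddMonoidHom.smul_apply, eHom_apply_of]
  -- G as a finite sum
  have hG : ∀ x : X, FreeAbelianGroup.lift (id : T → T) (u (of x)) = ∑ j, ε j • aext j x := by
    intro x
    rw [hu_of, map_sum]
    refine Finset.sum_congr rfl fun j _ => ?_
    rw [map_zsmul]
    by_cases h : x ∈ D j
    · rw [dif_pos h, lift_apply_of, haext]; simp [h]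
    · rw [dif_neg h, map_zero, haext]; simp [h]
  -- sV as a finite sum
  have hsV : ∀ (V : Set T) (x : X), sV V u x =
      ∑ j, ε j * (if h : x ∈ D j then (if a j ⟨x, h⟩ ∈ V then 1 else 0) else 0) := by
    intro V x
    rw [sV_apply_eq, hu_of, map_sum]
    refine Finset.sum_congr rfl fun j _ => ?_
    rw [map_zsmul]
    by_cases h : x ∈ D j
    · rw [dif_pos h, dif_pos h, lift_apply_of, smul_eq_mul]
    · rw [dif_neg h, dif_neg h, map_zero, smul_eq_mul]
  rw [continuous_iff_continuousAt]
  intro p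
  set I : Finset (Fin n) := Finset.univ.filter (fun j => p ∈ D j) with hI
  have hmemI : ∀ j, j ∈ I ↔ p ∈ D j := by
    intro j; rw [hI, Finset.mem_filter]; simp
  set qf : Fin n → T := fun j => aext j p with hqf
  have hqf_mem : ∀ j (h : p ∈ D j), qf j = a j ⟨p, h⟩ := fun j h => dif_pos h
  set Q : Finset T := I.image qf with hQ
  -- disjoint separation
  obtain ⟨W, hW, hWdisj⟩ := Set.Finite.t2_separation (Q.finite_toSet)
  -- R data
  have hR : ∀ q : T, u ∈ Rpq p q := by
    intro q
    have h1 : u ∈ ⨅ p : X, ⨅ q : T, Rpq p q := huR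
    exact AddSubgroup.mem_iInf.mp (AddSubgroup.mem_iInf.mp h1 p) q
  choose V₀ hV₀o hqV₀ hV₀ using hR
  set Vq : T → Set T := fun q => W q ∩ V₀ q with hVq
  have hVqo : ∀ q, IsOpen (Vq q) := fun q => ((hW q).2).inter (hV₀o q)
  have hqVq : ∀ q, q ∈ Vq q := fun q => ⟨(hW q).1, hqV₀ q⟩
  have hVqdisj : ∀ q ∈ Q, ∀ q' ∈ Q, q ≠ q' → ∀ t, t ∈ Vq q → t ∉ Vq q' := by
    intro q hq q' hq' hne t ht ht'
    exact Set.disjoint_left.mp (hWdisj hq hq' hne) ht.1 ht'.1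
  have hUex : ∀ q : T, ∃ U ∈ nhds p, ∀ x ∈ U, sV (Vq q) u x = sV (Vq q) u p := by
    intro q
    obtain ⟨U, hU, c, hc⟩ := hV₀ q (Vq q) (hVqo q) (hqVq q) Set.inter_subset_right
    exact ⟨U, hU, fun x hx => by rw [hc x hx, hc p (mem_of_mem_nhds hU)]⟩
  choose U hUmem hUconst using hUex
  -- neighbourhoods where a j stays in Vq (qf j)
  have hOex : ∀ j : Fin n, ∃ O : Set X, IsOpen O ∧ p ∈ O ∧
      (p ∈ D j → ∀ x (hx : x ∈ D j), x ∈ O → a j ⟨x, hx⟩ ∈ Vq (qf j)) := by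
    intro j
    by_cases hj : p ∈ D j
    · have hopen : IsOpen ((a j) ⁻¹' (Vq (qf j))) := (ha j).isOpen_preimage _ (hVqo _)
      rw [isOpen_induced_iff] at hopen
      obtain ⟨O, hOo, hOeq⟩ := hopen
      have hpmem : (⟨p, hj⟩ : D j) ∈ (Subtype.val ⁻¹' O : Set (D j)) := by
        rw [hOeq]
        show a j ⟨p, hj⟩ ∈ Vq (qf j)
        rw [hqf_mem j hj]
        exact hqVq _
      refine ⟨O, hOo, hpmem, fun _ x hx hxO => ?_⟩
      have : (⟨x, hx⟩ : D j) ∈ (Subtype.val ⁻¹' O : Set (D j)) := hxO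
      rw [hOeq] at this
      exact this
    · exact ⟨Set.univ, isOpen_univ, trivial, fun h => absurd h hj⟩
  choose O hOo hOp hOsub using hOex
  -- key formula for sV
  have key : ∀ (x : X), (∀ j, x ∈ D j → j ∈ I) →
      (∀ j (h : x ∈ D j), a j ⟨x, h⟩ ∈ Vq (qf j)) → ∀ q ∈ Q,
      sV (Vq q) u x =
        ∑ j ∈ (Finset.univ.filter (fun j => x ∈ D j)).filter (fun j => qf j = q), ε j := by
    intro x hx1 hx2 q hq
    rw [hsV]
    rw [← Finset.sum_subset (Finset.subset_univ
      ((Finset.univ.filter (fun j => x ∈ D j)).filter (fun j => qf j = q))) ?_]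
    · refine Finset.sum_congr rfl fun j hj => ?_
      rw [Finset.mem_filter, Finset.mem_filter] at hj
      obtain ⟨⟨-, hxDj⟩, hqfj⟩ := hj
      rw [dif_pos hxDj, if_pos (by rw [← hqfj]; exact hx2 j hxDj), mul_one]
    · intro j _ hj
      rw [Finset.mem_filter, Finset.mem_filter] at hj
      by_cases hxDj : x ∈ D j
      · have hqfj : qf j ≠ q := fun hcontra => hj ⟨⟨Finset.mem_univ j, hxDj⟩, hcontra⟩
        have hqfQ : qf j ∈ Q := by
          rw [hQ]; exact Finset.mem_image_of_mem qf (hx1 j hxDj)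
        rw [dif_pos hxDj, if_neg (hVqdisj (qf j) hqfQ q hq hqfj _ (hx2 j hxDj)), mul_zero]
      · rw [dif_neg hxDj, mul_zero]
  -- the pieces
  set CS : Finset (Fin n) → Set X := fun S => ⋂ j ∈ (S : Set (Fin n)), D j with hCS
  have hCSc : ∀ S, IsClosed (CS S) :=
    fun S => isClosed_iInter fun j => isClosed_iInter fun _ => hD j
  have hCSmem : ∀ S (x : X), x ∈ CS S ↔ ∀ j ∈ S, x ∈ D j := by
    intro S x; rw [hCS]; simp [Set.mem_iInter]
  set gS : ∀ S : Finset (Fin n), CS S → T := fun S x => ∑ j ∈ S, ε j • aext j ↑x with hgS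
  have hgScont : ∀ S, Continuous (gS S) := by
    intro S
    refine continuous_finsetSum_closedSub hadd (CS S) (hCSc S) S (fun j x => ε j • aext j ↑x)
      (fun j hj => ?_)
    have hsub : CS S ⊆ D j := fun y hy => (hCSmem S y).mp hy j hj
    have heq : (fun x : CS S => aext j ↑x) = (a j) ∘ (Set.inclusion hsub) := by
      funext x
      have hmem : (x : X) ∈ D j := hsub x.2
      simp only [haext, Function.comp_apply, dif_pos hmem]
    have hcont : Continuous (fun x : CS S => aext j ↑x) := by
      rw [heq]; exact (ha j).comp (continuous_inclusion hsub)
    show Continuous fun x : CS S => ε j • aext j ↑x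
    rcases hε j with h1 | h1
    · have h2 : (fun x : CS S => ε j • aext j ↑x) = (fun x : CS S => aext j ↑x) := by
        funext x; rw [h1, one_smul]
      rw [h2]; exact hcont
    · have h2 : (fun x : CS S => ε j • aext j ↑x) = -(fun x : CS S => aext j ↑x) := by
        funext x; rw [h1]; simp
      rw [h2]
      exact hneg (CS S) (hCSc S) _ hcont
  -- continuity at p
  rw [ContinuousAt, tendsto_nhds]
  intro W' hW'o hGpW'
  -- bad sets
  set Bad : Finset (Fin n) → Set X := fun S => Subtype.val '' (gS S ⁻¹' W'ᶜ) with hBad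
  have hBadc : ∀ S, IsClosed (Bad S) :=
    fun S => ((hCSc S).isClosedEmbedding_subtypeVal.isClosedMap) _
      ((hW'o.isClosed_compl).preimage (hgScont S))
  set 𝒮 : Finset (Finset (Fin n)) :=
    I.powerset.filter (fun S => ∀ h : p ∈ CS S, gS S ⟨p, h⟩ ∈ W') with hSS
  set Ic : Finset (Fin n) := Finset.univ.filter (fun j => p ∉ D j) with hIc
  set N : Set X := ((⋂ j, O j) ∩ (⋂ q ∈ Q, U q)) ∩
      ((⋃ j ∈ (Ic : Set (Fin n)), D j)ᶜ ∩ (⋂ S ∈ 𝒮, (Bad S)ᶜ)) with hN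
  have hNnhds : N ∈ nhds p := by
    refine Filter.inter_mem (Filter.inter_mem ?_ ?_) (Filter.inter_mem ?_ ?_)
    · exact (isOpen_iInter_of_finite hOo).mem_nhds (Set.mem_iInter.mpr hOp)
    · exact (Filter.biInter_finset_mem Q).mpr (fun q _ => hUmem q)
    · refine IsOpen.mem_nhds ((Ic.finite_toSet.isClosed_biUnion (fun j _ => hD j)).isOpen_compl) ?_
      simp only [Set.mem_compl_iff, Set.mem_iUnion]
      rintro ⟨j, hj, hpj⟩
      rw [hIc] at hj
      simp only [Finset.coe_filter, Set.mem_setOf_eq] at hj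
      exact hj.2 hpj
    · refine (Filter.biInter_finset_mem 𝒮).mpr (fun S hS => ?_)
      refine IsOpen.mem_nhds (hBadc S).isOpen_compl ?_
      intro hpBad
      obtain ⟨y, hy, hyval⟩ := hpBad
      rw [hSS, Finset.mem_filter] at hS
      have : gS S y ∈ W' := by
        have := hS.2 (hyval ▸ y.2)
        convert this using 2
        exact Subtype.ext hyval
      exact hy this
  refine Filter.mem_of_superset hNnhds ?_
  intro x hx
  obtain ⟨⟨hxO, hxU⟩, hxU', hxBad⟩ := hx
  set Sx : Finset (Fin n) := Finset.univ.filter (fun j => x ∈ D j) with hSx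
  have hx1 : ∀ j, x ∈ D j → j ∈ I := by
    intro j hj
    rw [hmemI]
    by_contra hpj
    have hjIc : j ∈ Ic := by rw [hIc, Finset.mem_filter]; exact ⟨Finset.mem_univ j, hpj⟩
    exact hxU' (Set.mem_biUnion (by exact_mod_cast hjIc) hj)
  have hSxI : Sx ⊆ I := by
    intro j hj
    rw [hSx, Finset.mem_filter] at hj
    exact hx1 j hj.2
  have hx2 : ∀ j (h : x ∈ D j), a j ⟨x, h⟩ ∈ Vq (qf j) := by
    intro j h
    exact hOsub j ((hmemI j).mp (hx1 j h)) x h (Set.mem_iInter.mp hxO j)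
  have hxCS : x ∈ CS Sx := (hCSmem Sx x).mpr (fun j hj => (Finset.mem_filter.mp hj).2)
  have hpCS : p ∈ CS Sx := (hCSmem Sx p).mpr (fun j hj => (hmemI j).mp (hSxI hj))
  have hGx : FreeAbelianGroup.lift (id : T → T) (u (of x)) = gS Sx ⟨x, hxCS⟩ := by
    have hvan : ∀ j ∈ Finset.univ, j ∉ Sx → ε j • aext j x = 0 := by
      intro j _ hj
      have hxj : x ∉ D j := fun h => hj (Finset.mem_filter.mpr ⟨Finset.mem_univ j, h⟩)
      simp only [haext, dif_neg hxj, smul_zero]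
    rw [hG x, ← Finset.sum_subset (Finset.subset_univ Sx) hvan]
  have hgroup : ∀ S : Finset (Fin n), S ⊆ I →
      ∑ j ∈ S, ε j • qf j = ∑ q ∈ Q, (∑ j ∈ S.filter (fun j => qf j = q), ε j) • q := by
    intro S hSI
    rw [← Finset.sum_fiberwise_of_maps_to (g := qf) (t := Q)
      (fun j hj => by rw [hQ]; exact Finset.mem_image_of_mem qf (hSI hj)) (fun j => ε j • qf j)]
    refine Finset.sum_congr rfl fun q hq => ?_
    rw [Finset.sum_smul]
    refine Finset.sum_congr rfl fun j hj => ?_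
    rw [(Finset.mem_filter.mp hj).2]
  have hGp : FreeAbelianGroup.lift (id : T → T) (u (of p)) = ∑ j ∈ I, ε j • qf j := by
    have hvan : ∀ j ∈ Finset.univ, j ∉ I → ε j • aext j p = 0 := by
      intro j _ hj
      have hpj : p ∉ D j := fun h => hj ((hmemI j).mpr h)
      simp only [haext, dif_neg hpj, smul_zero]
    rw [hG p, ← Finset.sum_subset (Finset.subset_univ I) hvan]
  have hclass : ∀ q ∈ Q, ∑ j ∈ Sx.filter (fun j => qf j = q), ε j
      = ∑ j ∈ I.filter (fun j => qf j = q), ε j := by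
    intro q hq
    have h1 := key x hx1 hx2 q hq
    have hp2 : ∀ j (h : p ∈ D j), a j ⟨p, h⟩ ∈ Vq (qf j) := fun j h => by
      rw [← hqf_mem j h]; exact hqVq _
    have h2 := key p (fun j h => (hmemI j).mpr h) hp2 q hq
    have h3 := hUconst q x (Set.mem_iInter₂.mp hxU q hq)
    rw [← hSx] at h1
    rw [← hI] at h2
    rw [h1, h2] at h3
    exact h3
  have hSxS : Sx ∈ 𝒮 := by
    rw [hSS, Finset.mem_filter, Finset.mem_powerset]
    refine ⟨hSxI, fun h => ?_⟩
    have he1 : gS Sx ⟨p, h⟩ = ∑ j ∈ Sx, ε j • qf j := rfl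
    rw [he1, hgroup Sx hSxI]
    have he2 : ∑ q ∈ Q, (∑ j ∈ Sx.filter (fun j => qf j = q), ε j) • q
        = ∑ q ∈ Q, (∑ j ∈ I.filter (fun j => qf j = q), ε j) • q :=
      Finset.sum_congr rfl (fun q hq => by rw [hclass q hq])
    rw [he2, ← hgroup I (subset_refl I), ← hGp]
    exact hGpW'
  have hxBad' : x ∉ Bad Sx := Set.mem_iInter₂.mp hxBad Sx hSxS
  simp only [Set.mem_preimage]
  rw [hGx]
  by_contra hnot
  exact hxBad' ⟨⟨x, hxCS⟩, hnot, rfl⟩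
end

section
/- Let X be a topological space, T a topological abelian group, M a divisible abelian group, and f : C(X,T) → M a function such that f(a) = f(b) whenever a and b are homotopic, and f(a + b) = f(a) + f(b) for all continuous a, b : X → T (with pointwise addition). Then f is a straight homotopy invariant. -/
/-- **Lemma 7.1.** For `X` a space, `T` a topological abelian group, and `M` a divisible
abelian group, every additive homotopy invariant `f : C(X,T) → M` is straight. -/
theorem additive_invariant_isStraight_of_divisible (X T M : Type*) [TopologicalSpace X]
    [TopologicalSpace T] [AddCommGroup T] [IsTopologicalAddGroup T] [AddCommGroup M]
    (hdiv : ∀ (m : M) (n : ℤ), n ≠ 0 → ∃ m' : M, n • m' = m)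
    (f : C(X, T) → M) (hf : IsHomotopyInvariant f)
    (hadd : ∀ a b : C(X, T), f (a + b) = f a + f b) :
    IsStraight f := by
  classical
  -- `M` is divisible, hence Baer over ℤ
  haveI : DivisibleBy M ℤ :=
    { div := fun m n => if h : n = 0 then 0 else (hdiv m n h).choose
      div_zero := fun m => by simp
      div_cancel := fun {n} m h => by
        simp only [dif_neg h]; exact (hdiv m n h).choose_spec }
  have baer : Module.Baer ℤ M := Module.Baer.of_divisible M
  -- f as an additive hom
  let fhom : C(X, T) →+ M := AddMonoidHom.mk' f hadd
  let liftC : FreeAbelianGroup C(X, T) →+ C(X, T) := FreeAbelianGroup.lift id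
  let hL : FreeAbelianGroup C(X, T) →+ Lgroup X T :=
    FreeAbelianGroup.lift (fun a : C(X, T) => inducedL (a : X → T))
  let g : FreeAbelianGroup C(X, T) →+ M := fhom.comp liftC
  -- evaluation identity
  have key : ∀ z : FreeAbelianGroup C(X, T), hL z = 0 → liftC z = 0 := by
    intro z hz
    ext x
    let ε : FreeAbelianGroup T →+ T := FreeAbelianGroup.lift id
    let evx : C(X, T) →+ T := AddMonoidHom.mk' (fun a => a x) (fun a b => rfl)
    have hcomp : evx.comp liftC =
        (ε.comp ((AddMonoidHom.eval (FreeAbelianGroup.of x)).comp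
          ((Lgroup X T).subtype.comp hL))) := by
      apply FreeAbelianGroup.lift_ext
      intro a
      simp [liftC, hL, evx, ε, inducedL, inducedHom, FreeAbelianGroup.lift_apply_of]
    have := congrArg (fun φ : FreeAbelianGroup C(X, T) →+ T => φ z) hcomp
    simp only [AddMonoidHom.comp_apply, hz] at this
    simpa [evx] using this
  have hker : hL.ker ≤ g.ker := by
    intro z hz
    have hz0 : liftC z = 0 := key z hz
    simp only [AddMonoidHom.mem_ker, g, AddMonoidHom.comp_apply, hz0, map_zero]
  -- factor g through the range of hL
  let e : FreeAbelianGroup C(X, T) ⧸ hL.ker ≃+ hL.range :=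
    QuotientAddGroup.quotientKerEquivRange hL
  let gbar : FreeAbelianGroup C(X, T) ⧸ hL.ker →+ M :=
    QuotientAddGroup.lift hL.ker g hker
  let φ : (hL.range : AddSubgroup (Lgroup X T)) →+ M :=
    gbar.comp e.symm.toAddMonoidHom
  obtain ⟨F, hF⟩ := baer.extension_property_addMonoidHom hL.range.subtype
    hL.range.subtype_injective φ
  refine ⟨F, fun a => ?_⟩
  have hmem : inducedL (a : X → T) ∈ hL.range :=
    ⟨FreeAbelianGroup.of a, FreeAbelianGroup.lift_apply_of _ _⟩
  have h1 : F (inducedL (a : X → T)) = φ ⟨inducedL (a : X → T), hmem⟩ := by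
    have := congrArg (fun ψ : (hL.range : AddSubgroup (Lgroup X T)) →+ M =>
      ψ ⟨inducedL (a : X → T), hmem⟩) hF
    simpa using this
  have h2 : e ((FreeAbelianGroup.of a : FreeAbelianGroup C(X, T)) : _ ⧸ hL.ker)
      = ⟨inducedL (a : X → T), hmem⟩ := by
    apply Subtype.ext
    show ((QuotientAddGroup.rangeKerLift hL) _ : Lgroup X T) = _
    exact (FreeAbelianGroup.lift_apply_of _ _ : hL (FreeAbelianGroup.of a) = _)
  rw [h1, ← h2]
  show f a = gbar (e.symm (e _))
  rw [e.symm_apply_apply]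
  simp [gbar, g, liftC, fhom, FreeAbelianGroup.lift_apply_of]
end
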